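/- arXiv:2411.06472 — 5 statements merged into one kernel-verified Lean document; each statement's English description precedes it below -/
import Mathlib

section
/- For the matrix M = S^{t+1} + b S^{t+2} + δ J with δ ≠ 0, every eigenvector v of M for the eigenvalue 0 satisfies Σ_{j=1}^n v_j = 0. -/
open Matrix Finset

/-- The n×n shift matrix with ones on the superdiagonal. -/
def shiftMat (n : ℕ) : Matrix (Fin n) (Fin n) ℂ :=
  Matrix.of fun j k => if (k : ℕ) = (j : ℕ) + 1 then 1 else 0

/-- The matrix `M = S^{t+1} + b S^{t+2} + δ J` of the dynamical system. -/
noncomputable def modelMat (n t : ℕ) (b δ : ℂ) : Matrix (Fin n) (Fin n) ℂ :=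
  (shiftMat n) ^ (t + 1) + b • (shiftMat n) ^ (t + 2) + δ • Matrix.of fun _ _ => (1 : ℂ)

lemma shiftMat_pow (n p : ℕ) (j k : Fin n) :
    ((shiftMat n) ^ p) j k = if (k : ℕ) = (j : ℕ) + p then 1 else 0 := by
  induction p generalizing k with
  | zero =>
    simp [pow_zero, Matrix.one_apply, Fin.ext_iff, eq_comm]
  | succ p ih =>
    rw [pow_succ, Matrix.mul_apply]
    simp only [ih]
    simp only [shiftMat, Matrix.of_apply]
    by_cases hjp : (j : ℕ) + p < n
    · rw [Finset.sum_eq_single_of_mem ⟨(j : ℕ) + p, hjp⟩ (Finset.mem_univ _)]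
      · have hk := k.isLt
        simp only [Fin.val_mk, if_pos rfl, one_mul]
        by_cases hk2 : (k : ℕ) = (j : ℕ) + p + 1
        · have h2 : (k : ℕ) = (j : ℕ) + (p + 1) := by omega
          simp [hk2, h2, Nat.add_assoc]
        · have h2 : ¬((k : ℕ) = (j : ℕ) + (p + 1)) := by omega
          simp [hk2, h2]
      · intro x _ hx
        have : (x : ℕ) ≠ (j : ℕ) + p := fun hh => hx (Fin.ext hh)
        simp [this]
    · rw [if_neg (by have := k.isLt; omega)]
      apply Finset.sum_eq_zero
      intro x _
      have : (x : ℕ) ≠ (j : ℕ) + p := by have := x.isLt; omega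
      simp [this]

/-- Every eigenvector of `M = S^{t+1} + b S^{t+2} + δ J` (with `δ ≠ 0`) for the
eigenvalue `0` satisfies `Σ_j v_j = 0`. -/
theorem modelMat_ker_sum_eq_zero (n t : ℕ) (hn : 2 ≤ n) (ht1 : 1 ≤ t) (ht2 : t ≤ n - 2)
    (b δ : ℂ) (hδ : δ ≠ 0) (v : Fin n → ℂ) (hv : v ≠ 0)
    (h : (modelMat n t b δ).mulVec v = 0) :
    ∑ j : Fin n, v j = 0 := by
  have hn1 : n - 1 < n := by omega
  have hrow := congrFun h ⟨n - 1, hn1⟩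
  rw [Matrix.mulVec, Pi.zero_apply] at hrow
  have hMi : ∀ k : Fin n, modelMat n t b δ ⟨n - 1, hn1⟩ k = δ := by
    intro k
    have hk := k.isLt
    simp only [modelMat, Matrix.add_apply, Matrix.smul_apply, Matrix.of_apply,
      shiftMat_pow, smul_eq_mul]
    rw [if_neg (show ¬((k : ℕ) = n - 1 + (t + 1)) by omega),
      if_neg (show ¬((k : ℕ) = n - 1 + (t + 2)) by omega)]
    ring
  rw [dotProduct] at hrow
  simp only [hMi] at hrow
  rw [← Finset.mul_sum] at hrow
  exact (mul_eq_zero.mp hrow).resolve_left hδ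
end

section
/- The kernel of M = S^{t+1} + b S^{t+2} + δ J with δ ≠ 0 equals the set of vectors v with v_j = 0 for all j > t+1 and Σ_{j=1}^{t+1} v_j = 0; in particular, the geometric multiplicity of the eigenvalue 0 of M equals t. -/
open Matrix Finset

lemma shiftMat_pow_apply (n p : ℕ) : ∀ j k : Fin n,
    ((shiftMat n) ^ p) j k = if (k : ℕ) = (j : ℕ) + p then (1 : ℂ) else 0 := by
  induction p with
  | zero =>
    intro j k
    simp [Matrix.one_apply, Fin.ext_iff, eq_comm]
  | succ p ih =>
    intro j k
    rw [pow_succ, Matrix.mul_apply]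
    simp only [ih]
    simp only [shiftMat, Matrix.of_apply]
    by_cases h : (k : ℕ) = (j : ℕ) + p + 1
    · have hm : (j : ℕ) + p < n := by omega
      rw [Finset.sum_eq_single (⟨(j : ℕ) + p, hm⟩ : Fin n)]
      · rw [if_pos rfl, if_pos h, one_mul, if_pos (by omega)]
      · intro m _ hm'
        rw [if_neg, zero_mul]
        intro hc
        exact hm' (Fin.ext hc)
      · simp
    · rw [if_neg (show ¬(k : ℕ) = (j : ℕ) + (p + 1) by omega)]
      apply Finset.sum_eq_zero
      intro m _
      by_cases h1 : (m : ℕ) = (j : ℕ) + p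
      · rw [if_neg (show ¬(k : ℕ) = (m : ℕ) + 1 by omega), mul_zero]
      · rw [if_neg h1, zero_mul]

lemma shiftMat_pow_mulVec (n p : ℕ) (v : Fin n → ℂ) (j : Fin n) :
    ((shiftMat n) ^ p).mulVec v j
      = if h : (j : ℕ) + p < n then v ⟨(j : ℕ) + p, h⟩ else 0 := by
  rw [Matrix.mulVec, dotProduct]
  simp only [shiftMat_pow_apply]
  split
  · next h =>
    rw [Finset.sum_eq_single (⟨(j : ℕ) + p, h⟩ : Fin n)]
    · simp
    · intro m _ hm'
      rw [if_neg, zero_mul]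
      intro hc
      exact hm' (Fin.ext hc)
    · simp
  · next h =>
    apply Finset.sum_eq_zero
    intro m _
    rw [if_neg (by omega), zero_mul]

lemma modelMat_mulVec_apply (n t : ℕ) (b δ : ℂ) (v : Fin n → ℂ) (j : Fin n) :
    (modelMat n t b δ).mulVec v j
      = (if h : (j : ℕ) + (t + 1) < n then v ⟨(j : ℕ) + (t + 1), h⟩ else 0)
        + b * (if h : (j : ℕ) + (t + 2) < n then v ⟨(j : ℕ) + (t + 2), h⟩ else 0)
        + δ * ∑ k, v k := by
  unfold modelMat
  rw [Matrix.add_mulVec, Matrix.add_mulVec, Matrix.smul_mulVec,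
    Matrix.smul_mulVec]
  simp only [Pi.add_apply, Pi.smul_apply, smul_eq_mul, shiftMat_pow_mulVec]
  congr 1
  congr 1
  rw [Matrix.mulVec, dotProduct]
  simp

lemma sum_filter_lt_fin (n m : ℕ) (hm : m ≤ n) (v : Fin n → ℂ) :
    ∑ j ∈ Finset.univ.filter (fun j : Fin n => (j : ℕ) < m), v j
      = ∑ i : Fin m, v (Fin.castLE hm i) := by
  have h2 : ∑ i : Fin m, v (Fin.castLE hm i)
      = ∑ j ∈ Finset.univ.image (Fin.castLE hm), v j :=
    (Finset.sum_image (fun a _ c _ h => Fin.castLE_injective hm h)).symm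
  rw [h2]
  congr 1
  ext j
  simp only [Finset.mem_filter, Finset.mem_univ, true_and, Finset.mem_image]
  constructor
  · intro h
    exact ⟨⟨(j : ℕ), h⟩, by ext; simp⟩
  · rintro ⟨i, rfl⟩
    exact i.2

noncomputable def buildVec (n t : ℕ) (w : Fin t → ℂ) : Fin n → ℂ :=
  fun j => if h : (j : ℕ) < t then w ⟨j, h⟩
    else if (j : ℕ) = t then -∑ i, w i else 0

noncomputable def buildLin (n t : ℕ) : (Fin t → ℂ) →ₗ[ℂ] (Fin n → ℂ) where
  toFun := buildVec n t
  map_add' w₁ w₂ := by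
    funext j
    simp only [buildVec, Pi.add_apply]
    split
    · rfl
    · split
      · rw [Finset.sum_add_distrib]; ring
      · ring
  map_smul' c w := by
    funext j
    simp only [buildVec, Pi.smul_apply, smul_eq_mul, RingHom.id_apply]
    split
    · rfl
    · split
      · rw [mul_neg, Finset.mul_sum]
      · ring

/-- The kernel of `M = S^{t+1} + b S^{t+2} + δ J` (with `δ ≠ 0`) equals the set of
vectors `v` with `v_j = 0` for all `j > t+1` and `Σ_{j=1}^{t+1} v_j = 0`;
in particular the geometric multiplicity of the eigenvalue `0` equals `t`. -/
theorem modelMat_ker_description (n t : ℕ) (hn : 2 ≤ n) (ht1 : 1 ≤ t) (ht2 : t ≤ n - 2)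
    (b δ : ℂ) (hδ : δ ≠ 0) :
    (∀ v : Fin n → ℂ, (modelMat n t b δ).mulVec v = 0 ↔
      ((∀ j : Fin n, t + 1 ≤ (j : ℕ) → v j = 0) ∧
        ∑ j ∈ Finset.univ.filter (fun j : Fin n => (j : ℕ) < t + 1), v j = 0)) ∧
    Module.finrank ℂ (LinearMap.ker (modelMat n t b δ).mulVecLin) = t := by
  have htn : t + 2 ≤ n := by omega
  have main : ∀ v : Fin n → ℂ, (modelMat n t b δ).mulVec v = 0 ↔
      ((∀ j : Fin n, t + 1 ≤ (j : ℕ) → v j = 0) ∧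
        ∑ j ∈ Finset.univ.filter (fun j : Fin n => (j : ℕ) < t + 1), v j = 0) := by
    intro v
    constructor
    · intro hv
      have hv' : ∀ j : Fin n, (modelMat n t b δ).mulVec v j = 0 :=
        fun j => congrFun hv j
      have hs : ∑ k, v k = 0 := by
        have h := hv' ⟨n - 1, by omega⟩
        rw [modelMat_mulVec_apply] at h
        have hval : ((⟨n - 1, by omega⟩ : Fin n) : ℕ) = n - 1 := rfl
        rw [hval, dif_neg (by omega), dif_neg (by omega), mul_zero, add_zero,
          zero_add] at h
        exact (mul_eq_zero.mp h).resolve_left hδ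
      have hzero : ∀ j : Fin n, t + 1 ≤ (j : ℕ) → v j = 0 := by
        have key : ∀ d, ∀ j : Fin n, t + 1 ≤ (j : ℕ) → n ≤ (j : ℕ) + d → v j = 0 := by
          intro d
          induction d with
          | zero => intro j hj hnd; exact absurd j.2 (by omega)
          | succ d ih =>
            intro j hj hnd
            have hjn : (j : ℕ) - (t + 1) < n := by omega
            have h := hv' ⟨(j : ℕ) - (t + 1), hjn⟩
            rw [modelMat_mulVec_apply] at h
            have hval : ((⟨(j : ℕ) - (t + 1), hjn⟩ : Fin n) : ℕ)
              = (j : ℕ) - (t + 1) := rfl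
            rw [hval] at h
            have hlt : (j : ℕ) - (t + 1) + (t + 1) < n := by omega
            rw [dif_pos hlt] at h
            have hjj : (⟨(j : ℕ) - (t + 1) + (t + 1), hlt⟩ : Fin n) = j :=
              Fin.ext (show (j : ℕ) - (t + 1) + (t + 1) = (j : ℕ) by omega)
            rw [hjj, hs, mul_zero, add_zero] at h
            by_cases hc : (j : ℕ) - (t + 1) + (t + 2) < n
            · rw [dif_pos hc] at h
              have ha : t + 1 ≤ (j : ℕ) - (t + 1) + (t + 2) := by omega
              have hb : n ≤ (j : ℕ) - (t + 1) + (t + 2) + d := by omega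
              have h2 : v ⟨(j : ℕ) - (t + 1) + (t + 2), hc⟩ = 0 :=
                ih ⟨(j : ℕ) - (t + 1) + (t + 2), hc⟩ ha hb
              rw [h2, mul_zero, add_zero] at h
              exact h
            · rw [dif_neg hc, mul_zero, add_zero] at h
              exact h
        intro j hj
        exact key n j hj (by omega)
      refine ⟨hzero, ?_⟩
      have hsplit := Finset.sum_filter_add_sum_filter_not Finset.univ
        (fun j : Fin n => (j : ℕ) < t + 1) v
      have hns : ∑ j ∈ Finset.univ.filter (fun j : Fin n => ¬ (j : ℕ) < t + 1), v j
          = 0 :=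
        Finset.sum_eq_zero (fun j hj => hzero j (by
          simp only [Finset.mem_filter, Finset.mem_univ, true_and] at hj; omega))
      rw [hns, add_zero, hs] at hsplit
      exact hsplit
    · rintro ⟨h1, h2⟩
      have hs : ∑ k, v k = 0 := by
        rw [← Finset.sum_filter_add_sum_filter_not Finset.univ
          (fun j : Fin n => (j : ℕ) < t + 1) v, h2, zero_add]
        exact Finset.sum_eq_zero (fun j hj => h1 j (by
          simp only [Finset.mem_filter, Finset.mem_univ, true_and] at hj; omega))
      funext j
      simp only [Pi.zero_apply]
      have e1 : (if h : (j : ℕ) + (t + 1) < n then v ⟨(j : ℕ) + (t + 1), h⟩ else 0)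
          = 0 := by
        split
        · next h => exact h1 ⟨(j : ℕ) + (t + 1), h⟩ (Nat.le_add_left _ _)
        · rfl
      have e2 : (if h : (j : ℕ) + (t + 2) < n then v ⟨(j : ℕ) + (t + 2), h⟩ else 0)
          = 0 := by
        split
        · next h =>
          exact h1 ⟨(j : ℕ) + (t + 2), h⟩ (le_trans (Nat.le_succ (t + 1)) (Nat.le_add_left (t + 2) (j : ℕ)))
        · rfl
      rw [modelMat_mulVec_apply, hs, mul_zero, e1, e2, mul_zero, add_zero, add_zero]
  refine ⟨main, ?_⟩
  have hginj : Function.Injective (buildLin n t) := by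
    intro w₁ w₂ hw
    funext i
    have h := congrFun hw (Fin.castLE (by omega : t ≤ n) i)
    have hi : ((Fin.castLE (by omega : t ≤ n) i : Fin n) : ℕ) < t := i.2
    simp only [buildLin, LinearMap.coe_mk, AddHom.coe_mk, buildVec, dif_pos hi] at h
    have hii : (⟨((Fin.castLE (by omega : t ≤ n) i : Fin n) : ℕ), hi⟩ : Fin t) = i :=
      Fin.ext rfl
    rw [hii] at h
    exact h
  have hker : LinearMap.ker (modelMat n t b δ).mulVecLin
      = LinearMap.range (buildLin n t) := by
    ext v
    rw [LinearMap.mem_ker, Matrix.mulVecLin_apply, main v, LinearMap.mem_range]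
    constructor
    · rintro ⟨h1, h2⟩
      refine ⟨fun i => v (Fin.castLE (by omega : t ≤ n) i), ?_⟩
      funext j
      show buildVec n t _ j = v j
      unfold buildVec
      split
      · next h =>
        exact congrArg v (Fin.ext rfl)
      · next h =>
        split
        · next hj =>
          rw [sum_filter_lt_fin n (t + 1) (by omega) v, Fin.sum_univ_castSucc] at h2
          have hlast : Fin.castLE (show t + 1 ≤ n by omega) (Fin.last t) = j :=
            Fin.ext (by simpa using hj.symm)
          rw [hlast] at h2
          have hrw : ∀ i : Fin t,
              v (Fin.castLE (show t + 1 ≤ n by omega) (Fin.castSucc i))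
                = v (Fin.castLE (by omega : t ≤ n) i) :=
            fun i => congrArg v (Fin.ext rfl)
          rw [Finset.sum_congr rfl (fun i _ => hrw i)] at h2
          linear_combination -h2
        · next hj =>
          exact (h1 j (by omega)).symm
    · rintro ⟨w, rfl⟩
      constructor
      · intro j hj
        show buildVec n t w j = 0
        unfold buildVec
        rw [dif_neg (by omega), if_neg (by omega)]
      · rw [sum_filter_lt_fin n (t + 1) (by omega), Fin.sum_univ_castSucc]
        have h1 : ∀ i : Fin t,
            buildLin n t w (Fin.castLE (show t + 1 ≤ n by omega) (Fin.castSucc i))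
              = w i := by
          intro i
          show buildVec n t w _ = w i
          unfold buildVec
          have hi : ((Fin.castLE (show t + 1 ≤ n by omega) (Fin.castSucc i)
            : Fin n) : ℕ) < t := i.2
          rw [dif_pos hi]
          exact congrArg w (Fin.ext rfl)
        have h2 : buildLin n t w (Fin.castLE (show t + 1 ≤ n by omega) (Fin.last t))
            = -∑ i, w i := by
          show buildVec n t w _ = _
          unfold buildVec
          rw [dif_neg (by simp), if_pos (by simp)]
        rw [Finset.sum_congr rfl (fun i _ => h1 i), h2, add_neg_cancel]
  rw [hker, LinearMap.finrank_range_of_inj hginj, Module.finrank_fin_fun]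
end

section
/- Let n ≥ 2, 2 ≤ t+1 ≤ n−1, p₁ = ⌊(n−1)/(t+1)⌋ and p₂ = ⌊(n−1)/(t+2)⌋. If t+1 ∈ [⌈√(n−1)⌉, n−1] and t+1 ∈ {⌊(n−1)/k⌋ : k = 1,…,n−1}, then p₁ − p₂ = 1; if t+1 ∈ [⌈√(n−1)⌉, n−1] but t+1 ∉ {⌊(n−1)/k⌋ : k = 1,…,n−1}, then p₁ = p₂. -/
lemma aux_B (m s : ℕ) (hs : 1 ≤ s) (hm : m ≤ s ^ 2) :
    m / s ≤ m / (s + 1) + 1 := by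
  set q := m / (s + 1) with hq
  have hqlt : m < (q + 1) * (s + 1) :=
    (Nat.div_lt_iff_lt_mul (by omega)).1 (Nat.lt_succ_self q)
  have hqs : q < s := by
    by_contra h
    push_neg at h
    have : s * (s + 1) ≤ m :=
      le_trans (Nat.mul_le_mul_right _ h) (Nat.div_mul_le_self m (s + 1))
    nlinarith
  have h2 : m < (q + 2) * s := by nlinarith
  exact Nat.lt_succ_iff.mp ((Nat.div_lt_iff_lt_mul (by omega)).2 h2)

theorem key_iff (m s : ℕ) (hs : 1 ≤ s) (hm : m ≤ s ^ 2) :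
    (∃ k, 1 ≤ k ∧ k ≤ m ∧ m / k = s) ↔ m / (s + 1) < m / s := by
  constructor
  · rintro ⟨k, hk1, hk2, hk3⟩
    have hks : k * s ≤ m := by
      have := Nat.div_mul_le_self m k
      rw [hk3, Nat.mul_comm] at this; exact this
    have hls : k ≤ m / s := (Nat.le_div_iff_mul_le (by omega)).2 hks
    have hlt : m < k * (s + 1) := by
      have h := (Nat.div_lt_iff_lt_mul (show 0 < k by omega)).1
        (Nat.lt_succ_self (m / k))
      rw [hk3, Nat.mul_comm] at h
      exact h
    have hgt : m / (s + 1) < k := (Nat.div_lt_iff_lt_mul (by omega)).2 hlt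
    exact lt_of_lt_of_le hgt hls
  · intro h
    have hkpos : 1 ≤ m / s := lt_of_le_of_lt (Nat.zero_le _) h
    refine ⟨m / s, hkpos, Nat.div_le_self m s, ?_⟩
    set k := m / s with hk
    have hks : k * s ≤ m := by
      have := Nat.div_mul_le_self m s; rwa [← hk] at this
    have hge : s ≤ m / k :=
      (Nat.le_div_iff_mul_le hkpos).2 (by rw [Nat.mul_comm]; exact hks)
    have hlt : m < k * (s + 1) := (Nat.div_lt_iff_lt_mul (by omega)).1 h
    have hle : m / k < s + 1 :=
      (Nat.div_lt_iff_lt_mul hkpos).2 (by rw [Nat.mul_comm]; exact hlt)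
    exact le_antisymm (Nat.lt_succ_iff.mp hle) hge

/-- Let `p₁ = ⌊(n−1)/(t+1)⌋` and `p₂ = ⌊(n−1)/(t+2)⌋`. If
`t+1 ∈ [⌈√(n−1)⌉, n−1]` (equivalently `n−1 ≤ (t+1)²` and `t+1 ≤ n−1`), then
`p₁ − p₂ = 1` when `t+1 = ⌊(n−1)/k⌋` for some `1 ≤ k ≤ n−1`, and `p₁ = p₂` otherwise. -/
theorem p1_sub_p2 (n t : ℕ) (hn : 2 ≤ n) (ht1 : 1 ≤ t) (ht2 : t ≤ n - 2)
    (hsqrt : n - 1 ≤ (t + 1) ^ 2) (hub : t + 1 ≤ n - 1) :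
    ((∃ k, 1 ≤ k ∧ k ≤ n - 1 ∧ (n - 1) / k = t + 1) →
        (n - 1) / (t + 1) = (n - 1) / (t + 2) + 1) ∧
    (¬ (∃ k, 1 ≤ k ∧ k ≤ n - 1 ∧ (n - 1) / k = t + 1) →
        (n - 1) / (t + 1) = (n - 1) / (t + 2)) := by
  have hs1 : 1 ≤ t + 1 := by omega
  have hB : (n - 1) / (t + 1) ≤ (n - 1) / (t + 2) + 1 := by
    have := aux_B (n - 1) (t + 1) hs1 hsqrt
    simpa using this
  have hA : (n - 1) / (t + 2) ≤ (n - 1) / (t + 1) :=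
    Nat.div_le_div_left (by omega) (by omega)
  have key : (∃ k, 1 ≤ k ∧ k ≤ n - 1 ∧ (n - 1) / k = t + 1) ↔
      (n - 1) / (t + 2) < (n - 1) / (t + 1) := by
    have := key_iff (n - 1) (t + 1) hs1 hsqrt
    simpa using this
  constructor
  · intro h
    have hlt := key.1 h
    exact le_antisymm hB hlt
  · intro h
    have := key.not.1 h
    exact le_antisymm (by omega) hA
end

section
/- For the Jordan chain equation (S^{t+1} + b S^{t+2}) w = v with v = e_1 − e_{ℓ+1} and 1 ≤ ℓ, t+2+ℓ ≤ n: the vector w = (b(−1+(−b)^ℓ)/(1+b)) e_1 + (1 − (−b)^ℓ) e_{t+2} − Σ_{p=1}^{ℓ} (−b)^{ℓ−p} e_{t+2+p} satisfies (S^{t+1} + b S^{t+2}) w = v and Σ_{j=1}^n w_j = 0, provided b ≠ −1. -/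
open Matrix Finset

/-- The standard basis vector `e_{i+1}` of `ℂ^n`, indexed by `i : ℕ` (zero-based). -/
def stdVec (n : ℕ) (i : ℕ) : Fin n → ℂ := fun j => if (j : ℕ) = i then 1 else 0

lemma shift_mulVec (n : ℕ) (v : Fin n → ℂ) (j : Fin n) :
    (shiftMat n).mulVec v j = if h : (j:ℕ)+1 < n then v ⟨(j:ℕ)+1, h⟩ else 0 := by
  unfold shiftMat Matrix.mulVec dotProduct
  split
  · rename_i h
    rw [Finset.sum_eq_single (⟨(j:ℕ)+1, h⟩ : Fin n)]
    · simp
    · intro k _ hk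
      simp only [Matrix.of_apply]
      rw [if_neg, zero_mul]
      intro hc; exact hk (Fin.ext hc)
    · simp
  · rename_i h
    apply Finset.sum_eq_zero
    intro k _
    simp only [Matrix.of_apply]
    rw [if_neg, zero_mul]
    intro hc; exact h (hc ▸ k.isLt)

lemma shift_pow_mulVec (n m : ℕ) (v : Fin n → ℂ) (j : Fin n) :
    ((shiftMat n) ^ m).mulVec v j = if h : (j:ℕ) + m < n then v ⟨(j:ℕ)+m, h⟩ else 0 := by
  induction m generalizing j with
  | zero => simp [Matrix.one_mulVec]
  | succ m ih =>
    rw [pow_succ', ← Matrix.mulVec_mulVec, shift_mulVec]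
    split
    · rename_i h
      rw [ih]
      simp only [Fin.val_mk]
      split
      · rename_i h2
        rw [dif_pos (by omega : (j:ℕ) + (m+1) < n)]
        congr 1
        exact Fin.ext (by simp; omega)
      · rename_i h2
        rw [dif_neg (by omega)]
    · rename_i h
      rw [dif_neg (by omega)]

lemma sum_stdVec_apply (n t ℓ : ℕ) (b : ℂ) (k : Fin n) :
    (∑ p ∈ Finset.Icc 1 ℓ, (-b) ^ (ℓ - p) • stdVec n (t + 1 + p)) k
      = if t + 2 ≤ (k:ℕ) ∧ (k:ℕ) ≤ t + 1 + ℓ then (-b) ^ (ℓ - ((k:ℕ) - (t+1))) else 0 := by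
  rw [Finset.sum_apply]
  split
  · rename_i h
    rw [Finset.sum_eq_single ((k:ℕ) - (t+1))]
    · simp only [Pi.smul_apply, stdVec, smul_eq_mul]
      rw [if_pos (by omega), mul_one]
    · intro p hp hpk
      simp only [Pi.smul_apply, stdVec, smul_eq_mul, Finset.mem_Icc] at *
      rw [if_neg (by omega), mul_zero]
    · intro hmem
      simp only [Finset.mem_Icc] at hmem
      omega
  · rename_i h
    apply Finset.sum_eq_zero
    intro p hp
    simp only [Pi.smul_apply, stdVec, smul_eq_mul, Finset.mem_Icc] at *
    rw [if_neg (by omega), mul_zero]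

lemma sum_stdVec_all (n i : ℕ) (hi : i < n) : ∑ j : Fin n, stdVec n i j = 1 := by
  rw [Finset.sum_eq_single (⟨i, hi⟩ : Fin n)]
  · simp [stdVec]
  · intro k _ hk
    simp only [stdVec]
    rw [if_neg (fun hc => hk (Fin.ext hc))]
  · simp

/-- For the Jordan chain equation `(S^{t+1} + b S^{t+2}) w = e₁ − e_{ℓ+1}` with
`t+2+ℓ ≤ n` and `b ≠ −1`, the explicit vector
`w = (b(−1+(−b)^ℓ)/(1+b)) e₁ + (1−(−b)^ℓ) e_{t+2} − Σ_{p=1}^{ℓ} (−b)^{ℓ−p} e_{t+2+p}`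
solves the equation and has zero coordinate sum. -/
theorem jordan_chain_solution (n t ℓ : ℕ) (hn : 2 ≤ n) (ht1 : 1 ≤ t) (ht2 : t ≤ n - 2)
    (hℓ : 1 ≤ ℓ) (hle : t + 2 + ℓ ≤ n) (b : ℂ) (hb : b ≠ -1)
    (w : Fin n → ℂ)
    (hw : w = (b * (-1 + (-b) ^ ℓ) / (1 + b)) • stdVec n 0
            + (1 - (-b) ^ ℓ) • stdVec n (t + 1)
            - ∑ p ∈ Finset.Icc 1 ℓ, (-b) ^ (ℓ - p) • stdVec n (t + 1 + p)) :
    ((shiftMat n) ^ (t + 1) + b • (shiftMat n) ^ (t + 2)).mulVec w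
      = stdVec n 0 - stdVec n ℓ ∧
    ∑ j : Fin n, w j = 0 := by
  have h1b : (1 : ℂ) + b ≠ 0 := fun h => hb (by linear_combination h)
  set A : ℂ := b * (-1 + (-b) ^ ℓ) / (1 + b) with hA
  set B : ℂ := 1 - (-b) ^ ℓ with hB
  set g : ℕ → ℂ := fun k =>
    (if k = 0 then A else 0) + (if k = t + 1 then B else 0)
      - (if t + 2 ≤ k ∧ k ≤ t + 1 + ℓ then (-b) ^ (ℓ - (k - (t+1))) else 0) with hg
  have hwk : ∀ k : Fin n, w k = g (k : ℕ) := by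
    intro k
    rw [hw]
    simp only [Pi.sub_apply, Pi.add_apply, Pi.smul_apply, smul_eq_mul,
      sum_stdVec_apply, stdVec, hg, mul_ite, mul_one, mul_zero]
  have key : ∀ k : ℕ, (if h : k < n then w ⟨k, h⟩ else 0) = g k := by
    intro k
    split
    · rw [hwk]
    · rename_i h
      rw [hg]
      simp only
      rw [if_neg (by omega), if_neg (by omega), if_neg (by omega)]
      ring
  constructor
  · funext j
    rw [Matrix.add_mulVec, Matrix.smul_mulVec, Pi.add_apply, Pi.smul_apply,
      smul_eq_mul, shift_pow_mulVec, shift_pow_mulVec, key ((j:ℕ) + (t+1)),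
      key ((j:ℕ) + (t+2)), Pi.sub_apply]
    simp only [stdVec, hg]
    by_cases hj0 : (j : ℕ) = 0
    · rw [if_neg (by omega), if_pos (by omega), if_neg (by omega),
        if_neg (by omega), if_neg (by omega), if_pos (by omega),
        if_pos hj0, if_neg (by omega)]
      have e1 : ℓ - ((j:ℕ) + (t+2) - (t+1)) = ℓ - 1 := by omega
      rw [e1]
      obtain ⟨m, rfl⟩ : ∃ m, ℓ = m + 1 := ⟨ℓ - 1, by omega⟩
      simp only [hB, Nat.add_sub_cancel, pow_succ]
      ring
    · by_cases hjl : (j : ℕ) < ℓ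
      · rw [if_neg (by omega), if_neg (by omega), if_pos (by omega),
          if_neg (by omega), if_neg (by omega), if_pos (by omega),
          if_neg hj0, if_neg (by omega)]
        have e1 : ℓ - ((j:ℕ) + (t+1) - (t+1)) = (ℓ - ((j:ℕ) + (t+2) - (t+1))) + 1 := by omega
        rw [e1, pow_succ]
        ring
      · by_cases hje : (j : ℕ) = ℓ
        · rw [if_neg (by omega), if_neg (by omega), if_pos (by omega),
            if_neg (by omega), if_neg (by omega), if_neg (by omega),
            if_neg hj0, if_pos hje]
          have e1 : ℓ - ((j:ℕ) + (t+1) - (t+1)) = 0 := by omega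
          rw [e1, pow_zero]
          ring
        · rw [if_neg (by omega), if_neg (by omega), if_neg (by omega),
            if_neg (by omega), if_neg (by omega), if_neg (by omega),
            if_neg hj0, if_neg hje]
          ring
  · have hinner : ∀ p ∈ Finset.Icc 1 ℓ,
        (∑ x : Fin n, (-b) ^ (ℓ - p) * stdVec n (t + 1 + p) x) = (-b) ^ (ℓ - p) := by
      intro p hp
      simp only [Finset.mem_Icc] at hp
      rw [← Finset.mul_sum, sum_stdVec_all n (t+1+p) (by omega), mul_one]
    have hsum : ∑ j : Fin n, w j
        = A + B - ∑ p ∈ Finset.Icc 1 ℓ, (-b) ^ (ℓ - p) := by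
      rw [hw]
      simp only [Pi.sub_apply, Pi.add_apply, Pi.smul_apply, smul_eq_mul, Finset.sum_apply]
      rw [Finset.sum_sub_distrib, Finset.sum_add_distrib, ← Finset.mul_sum, ← Finset.mul_sum,
        sum_stdVec_all n 0 (by omega), sum_stdVec_all n (t+1) (by omega), Finset.sum_comm,
        Finset.sum_congr rfl hinner]
      ring
    rw [hsum]
    have hgeom : ∑ p ∈ Finset.Icc 1 ℓ, (-b) ^ (ℓ - p) = ∑ q ∈ Finset.range ℓ, (-b) ^ q := by
      rw [← Finset.Ico_add_one_right_eq_Icc, Finset.sum_Ico_eq_sum_range]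
      norm_num
      rw [← Finset.sum_range_reflect]
      apply Finset.sum_congr rfl
      intro q hq
      simp only [Finset.mem_range] at hq
      congr 1
      omega
    have h2 : (-b : ℂ) - 1 ≠ 0 := fun h => h1b (by linear_combination -h)
    rw [hgeom, geom_sum_eq (fun h => hb (by linear_combination -h)) ℓ, hA, hB]
    generalize ((-b : ℂ) ^ ℓ) = C
    field_simp
    ring
end

section
/- Conversely, if λ ∈ ℂ is not an eigenvalue of M ∈ ℂ^{n×n} and ‖(λI − M)^{-1}‖ > ε^{-1} for some ε > 0, then there exists E ∈ ℂ^{n×n} with ‖E‖ < ε such that λ is an eigenvalue of M + E. -/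
open Matrix

/-- If `λ` is not an eigenvalue of `M` and `‖(λI − M)⁻¹‖ > ε⁻¹`, then there exists a
perturbation `E` with `‖E‖ < ε` such that `λ` is an eigenvalue of `M + E`. -/
theorem pseudospectrum_resolvent_to_perturb (n : ℕ) (M : Matrix (Fin n) (Fin n) ℂ)
    (lam : ℂ) (ε : ℝ) (hε : 0 < ε)
    (hnev : ¬ ∃ v : Fin n → ℂ, v ≠ 0 ∧ M.mulVec v = lam • v)
    (hres : ε⁻¹ < ‖Matrix.toEuclideanCLM (𝕜 := ℂ)
        ((lam • (1 : Matrix (Fin n) (Fin n) ℂ) - M)⁻¹)‖) :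
    ∃ E : Matrix (Fin n) (Fin n) ℂ,
      ‖Matrix.toEuclideanCLM (𝕜 := ℂ) E‖ < ε ∧
      ∃ v : Fin n → ℂ, v ≠ 0 ∧ (M + E).mulVec v = lam • v := by
  set A : Matrix (Fin n) (Fin n) ℂ := lam • (1 : Matrix (Fin n) (Fin n) ℂ) - M with hA
  -- A is invertible since lam is not an eigenvalue
  have hinj : Function.Injective A.mulVec := by
    intro w1 w2 h
    by_contra hne
    apply hnev
    refine ⟨w1 - w2, sub_ne_zero.2 hne, ?_⟩
    have h0 : A.mulVec (w1 - w2) = 0 := by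
      rw [Matrix.mulVec_sub, h, sub_self]
    have h1 : A.mulVec (w1 - w2) = lam • (w1 - w2) - M.mulVec (w1 - w2) := by
      simp [hA, Matrix.sub_mulVec, Matrix.smul_mulVec, Matrix.one_mulVec]
    rw [h0] at h1
    linear_combination (norm := module) h1
  have hU : IsUnit A.det :=
    (Matrix.isUnit_iff_isUnit_det A).mp (Matrix.mulVec_injective_iff_isUnit.mp hinj)
  set R := Matrix.toEuclideanCLM (𝕜 := ℂ) A⁻¹ with hR
  -- find a vector where the resolvent is large
  obtain ⟨x, hx⟩ : ∃ x : EuclideanSpace ℂ (Fin n), ε⁻¹ * ‖x‖ < ‖R x‖ := by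
    by_contra h
    push_neg at h
    have := ContinuousLinearMap.opNorm_le_bound R (le_of_lt (inv_pos.2 hε)) h
    exact absurd hres (not_lt.2 this)
  set y : EuclideanSpace ℂ (Fin n) := R x with hy
  have hx0 : x ≠ 0 := by
    rintro rfl
    simp only [norm_zero, mul_zero] at hx
    rw [hy] at hx
    simp at hx
  have hxpos : 0 < ‖x‖ := norm_pos_iff.2 hx0
  have hypos : 0 < ‖y‖ := lt_of_le_of_lt (by positivity) hx
  have hy0 : y ≠ 0 := norm_pos_iff.1 hypos
  -- A sends y to x
  have hAy : Matrix.toEuclideanCLM (𝕜 := ℂ) A y = x := by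
    have h1 : Matrix.toEuclideanCLM (𝕜 := ℂ) (A * A⁻¹) x = x := by
      rw [Matrix.mul_nonsing_inv _ hU]; simp
    rw [_root_.map_mul, ContinuousLinearMap.mul_apply] at h1
    exact h1
  set v : Fin n → ℂ := WithLp.equiv 2 _ y with hv
  set xf : Fin n → ℂ := WithLp.equiv 2 _ x with hxf
  have hAv : A.mulVec v = xf := by
    have := Matrix.ofLp_toEuclideanCLM (𝕜 := ℂ) A y
    rw [hAy] at this
    rw [hxf, hv]; exact this.symm
  -- the rank one perturbation
  set E : Matrix (Fin n) (Fin n) ℂ :=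
    Matrix.of fun i j => xf i * (starRingEnd ℂ) (v j) / (‖y‖ : ℂ) ^ 2 with hE
  have hEmul : ∀ z : Fin n → ℂ,
      E.mulVec z = ((∑ j, (starRingEnd ℂ) (v j) * z j) / (‖y‖ : ℂ) ^ 2) • xf := by
    intro z
    funext i
    simp only [hE, Matrix.mulVec, dotProduct, Matrix.of_apply, Pi.smul_apply,
      smul_eq_mul, Finset.sum_div, Finset.sum_mul, Finset.mul_sum]
    congr 1
    funext j
    ring
  have hinner : ∀ z : EuclideanSpace ℂ (Fin n),
      (∑ j, (starRingEnd ℂ) (v j) * (WithLp.equiv 2 _ z) j) = inner (𝕜 := ℂ) y z := by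
    intro z
    rw [PiLp.inner_apply]
    simp only [RCLike.inner_apply']
    rfl
  -- E sends y to x
  have hEv : E.mulVec v = xf := by
    rw [hEmul v]
    have : (∑ j, (starRingEnd ℂ) (v j) * v j) = (‖y‖ : ℂ) ^ 2 := by
      have := hinner y
      rw [inner_self_eq_norm_sq_to_K (𝕜 := ℂ) y] at this
      exact this
    rw [this, div_self (pow_ne_zero 2 (Complex.ofReal_ne_zero.mpr hypos.ne')), one_smul]
  -- norm estimate for E
  have hEnorm : ‖Matrix.toEuclideanCLM (𝕜 := ℂ) E‖ < ε := by
    have hbound : ‖Matrix.toEuclideanCLM (𝕜 := ℂ) E‖ ≤ ‖x‖ / ‖y‖ := by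
      apply ContinuousLinearMap.opNorm_le_bound _ (by positivity)
      intro z
      have happ : Matrix.toEuclideanCLM (𝕜 := ℂ) E z =
          ((inner (𝕜 := ℂ) y z) / (‖y‖ : ℂ) ^ 2) • x := by
        apply (WithLp.equiv 2 _).injective
        show E *ᵥ (WithLp.equiv 2 _ z) = WithLp.equiv 2 _ (((inner (𝕜 := ℂ) y z) / (‖y‖ : ℂ) ^ 2) • x)
        rw [hEmul, ← hinner]; rfl
      rw [happ, norm_smul]
      have hCS : ‖inner (𝕜 := ℂ) y z‖ ≤ ‖y‖ * ‖z‖ := norm_inner_le_norm y z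
      have : ‖(inner (𝕜 := ℂ) y z) / (‖y‖ : ℂ) ^ 2‖ ≤ ‖z‖ / ‖y‖ := by
        rw [norm_div]
        have h2 : ‖((‖y‖ : ℂ)) ^ 2‖ = ‖y‖ ^ 2 := by
          rw [norm_pow, Complex.norm_real, Real.norm_eq_abs, abs_of_pos hypos]
        rw [h2, div_le_div_iff₀ (by positivity) hypos]
        nlinarith [hCS, norm_nonneg (inner (𝕜 := ℂ) y z), hypos, norm_nonneg z]
      calc ‖(inner (𝕜 := ℂ) y z) / (‖y‖ : ℂ) ^ 2‖ * ‖x‖ ≤ (‖z‖ / ‖y‖) * ‖x‖ :=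
            mul_le_mul_of_nonneg_right this (norm_nonneg _)
        _ = ‖x‖ / ‖y‖ * ‖z‖ := by ring
    refine lt_of_le_of_lt hbound ?_
    rw [div_lt_iff₀ hypos]
    have : ε⁻¹ * ‖x‖ < ‖y‖ := hx
    calc ‖x‖ = ε * (ε⁻¹ * ‖x‖) := by field_simp
      _ < ε * ‖y‖ := by exact mul_lt_mul_of_pos_left this hε
  refine ⟨E, hEnorm, v, ?_, ?_⟩
  · intro h
    apply hy0
    have : y = (WithLp.equiv 2 _).symm v := rfl
    rw [this, h]
    rfl
  · have hAv' : A.mulVec v = lam • v - M.mulVec v := by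
      simp [hA, Matrix.sub_mulVec, Matrix.smul_mulVec, Matrix.one_mulVec]
    rw [Matrix.add_mulVec, hEv, ← hAv, hAv']
    linear_combination (norm := module) (0 : Fin n → ℂ)
end
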